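/- If a graph G is 2-narrow, then G contains a clique or a stable set of size at least |V(G)|^(1/4). -/

import Mathlib

open SimpleGraph

/-- The clique number of a graph: the largest size of a clique. -/
noncomputable def cliqueNumber {V : Type*} [Fintype V] (G : SimpleGraph V) : ℕ :=
  sSup {n | ∃ s : Finset V, G.IsNClique n s}

/-- A graph is perfect if every induced subgraph has chromatic number
equal to its clique number. -/
def IsPerfect {V : Type*} [Fintype V] (G : SimpleGraph V) : Prop :=
  ∀ s : Finset V,
    (G.induce (↑s : Set V)).chromaticNumber = (cliqueNumber (G.induce (↑s : Set V)) : ℕ∞)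

/-- A function `f : V(G) → [0,1]` is good if its sum over the vertex set of every
perfect induced subgraph of `G` is at most 1. -/
def Good {V : Type*} [Fintype V] (G : SimpleGraph V) (f : V → ℝ) : Prop :=
  (∀ v, f v ∈ Set.Icc (0 : ℝ) 1) ∧
  ∀ s : Finset V, IsPerfect (G.induce (↑s : Set V)) → ∑ v ∈ s, f v ≤ 1

/-- For `α ≥ 1`, a graph `G` is `α`-narrow if `∑ f(v)^α ≤ 1` for every good `f`. -/
def IsNarrow {V : Type*} [Fintype V] (α : ℝ) (G : SimpleGraph V) : Prop :=
  ∀ f : V → ℝ, Good G f → ∑ v, (f v) ^ α ≤ 1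

/- ### Auxiliary lemmas -/

theorem cliqueNumber_attained {V : Type*} [Fintype V] (G : SimpleGraph V) :
    ∃ s : Finset V, G.IsNClique (cliqueNumber G) s := by
  have hbdd : BddAbove {n | ∃ s : Finset V, G.IsNClique n s} := by
    refine ⟨Fintype.card V, fun n hn => ?_⟩
    obtain ⟨s, hs⟩ := hn
    rw [← hs.2]; exact s.card_le_univ.trans_eq (by simp)
  have h0 : (0:ℕ) ∈ {n | ∃ s : Finset V, G.IsNClique n s} := ⟨∅, by simp [isNClique_empty]⟩
  exact Nat.sSup_mem ⟨0, h0⟩ hbdd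

/-- If χ(H) = ω(H) and W nonempty, there are a clique c and stable set st with
card W ≤ c.card * st.card. -/
theorem key_count {W : Type*} [Fintype W] [Nonempty W] (H : SimpleGraph W)
    (hperf : H.chromaticNumber = (cliqueNumber H : ℕ∞)) :
    ∃ c st : Finset W, H.IsClique ↑c ∧ Hᶜ.IsClique ↑st ∧
      Fintype.card W ≤ c.card * st.card := by
  classical
  set ω := cliqueNumber H with hω
  obtain ⟨c, hc⟩ := cliqueNumber_attained H
  have hcol : H.Colorable ω := by
    rw [← chromaticNumber_le_iff_colorable, hperf]
  obtain ⟨C⟩ := hcol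
  have hω1 : 0 < ω := by
    rcases Nat.eq_zero_or_pos ω with h | h
    · exfalso; have := (C (Classical.arbitrary W)).2; omega
    · exact h
  have hne : (Finset.univ : Finset (Fin ω)).Nonempty := by
    simpa [Finset.univ_nonempty_iff] using Fin.pos_iff_nonempty.mp hω1
  obtain ⟨i₀, _, hi₀⟩ := Finset.exists_max_image Finset.univ
    (fun i => (Finset.univ.filter (fun v => C v = i)).card) hne
  refine ⟨c, Finset.univ.filter (fun v => C v = i₀), hc.1, ?_, ?_⟩
  · intro a ha b hb hab
    rw [compl_adj]
    refine ⟨hab, fun hadj => ?_⟩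
    simp only [Finset.coe_filter, Set.mem_setOf_eq] at ha hb
    exact C.valid hadj (ha.2.trans hb.2.symm)
  · have hsum : Fintype.card W =
        ∑ i : Fin ω, (Finset.univ.filter (fun v => C v = i)).card := by
      rw [← Finset.card_univ]
      exact Finset.card_eq_sum_card_fiberwise (fun x _ => Finset.mem_univ _)
    rw [hsum, hc.2]
    calc ∑ i : Fin ω, (Finset.univ.filter (fun v => C v = i)).card
        ≤ ∑ _i : Fin ω, (Finset.univ.filter (fun v => C v = i₀)).card :=
          Finset.sum_le_sum (fun i _ => hi₀ i (Finset.mem_univ i))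
      _ = ω * (Finset.univ.filter (fun v => C v = i₀)).card := by
          simp [Finset.sum_const, Fintype.card_fin, mul_comm]

/-- Lift a clique of an induced subgraph to a clique of the parent graph. -/
theorem clique_lift {V : Type*} (G : SimpleGraph V) (A : Set V) (t : Finset A)
    (ht : (G.induce A).IsClique ↑t) :
    G.IsClique ↑(t.map (Function.Embedding.subtype _)) ∧
      (t.map (Function.Embedding.subtype _)).card = t.card := by
  constructor
  · intro a ha b hb hab
    simp only [Finset.coe_map, Set.mem_image, Finset.mem_coe,
      Function.Embedding.coe_subtype] at ha hb
    obtain ⟨a', ha', rfl⟩ := ha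
    obtain ⟨b', hb', rfl⟩ := hb
    have : a' ≠ b' := fun h => hab (by rw [h])
    exact ht ha' hb' this
  · exact Finset.card_map _

theorem compl_induce {V : Type*} (G : SimpleGraph V) (A : Set V) :
    (G.induce A)ᶜ = Gᶜ.induce A := by
  ext a b
  simp only [compl_adj, comap_adj, Function.Embedding.coe_subtype]
  constructor
  · rintro ⟨h1, h2⟩; exact ⟨fun h => h1 (Subtype.ext h), h2⟩
  · rintro ⟨h1, h2⟩; exact ⟨fun h => h1 (congrArg _ h), h2⟩

theorem card_univ_coe {V : Type*} [Fintype V] (s : Finset V) :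
    Fintype.card ↥(↑(Finset.univ : Finset ↥(↑s : Set V)) : Set ↥(↑s : Set V)) = s.card := by
  have e : ↥(↑(Finset.univ : Finset ↥(↑s : Set V)) : Set ↥(↑s : Set V)) ≃ ↥(↑s : Set V) :=
    (Equiv.subtypeEquivRight (by simp)).trans (Equiv.Set.univ _)
  rw [Fintype.card_congr e]
  simp

/-- A perfect induced subgraph has at most (clique)·(stable) many vertices,
with clique/stable sets living in the ambient graph. -/
theorem perfect_card_le {V : Type*} [Fintype V] (G : SimpleGraph V) (s : Finset V)
    (hs : s.Nonempty) (hperf : IsPerfect (G.induce (↑s : Set V))) :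
    ∃ c st : Finset V, G.IsClique ↑c ∧ Gᶜ.IsClique ↑st ∧ s.card ≤ c.card * st.card := by
  classical
  set W := ↥(↑s : Set V)
  have hWne : Nonempty W := ⟨⟨hs.choose, by simpa using hs.choose_spec⟩⟩
  set H := (G.induce (↑s : Set V)).induce (↑(Finset.univ : Finset W) : Set W)
  have hNE : Nonempty ↥(↑(Finset.univ : Finset W) : Set W) :=
    ⟨⟨Classical.arbitrary W, by simp⟩⟩
  obtain ⟨c, st, hcl, hst, hcount⟩ := key_count H (hperf (Finset.univ : Finset W))
  -- lift the clique twice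
  obtain ⟨hcl1, hcard1⟩ := clique_lift (G.induce (↑s : Set V)) _ c hcl
  obtain ⟨hcl2, hcard2⟩ := clique_lift G _ _ hcl1
  -- lift the stable set twice
  rw [compl_induce, compl_induce] at hst
  obtain ⟨hst1, hscard1⟩ := clique_lift (Gᶜ.induce (↑s : Set V)) _ st hst
  obtain ⟨hst2, hscard2⟩ := clique_lift Gᶜ _ _ hst1
  refine ⟨_, _, hcl2, hst2, ?_⟩
  rw [hcard2, hcard1, hscard2, hscard1]
  calc s.card = Fintype.card ↥(↑(Finset.univ : Finset W) : Set W) := (card_univ_coe s).symm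
    _ ≤ c.card * st.card := hcount

theorem two_narrow_clique_or_stable {V : Type*} [Fintype V] (G : SimpleGraph V)
    (hnarrow : IsNarrow 2 G) :
    ∃ s : Finset V, (G.IsClique (↑s : Set V) ∨ Gᶜ.IsClique (↑s : Set V)) ∧
      (Fintype.card V : ℝ) ^ ((1 : ℝ) / 4) ≤ s.card := by
  classical
  rcases isEmpty_or_nonempty V with hV | hV
  · refine ⟨∅, Or.inl (by simp), ?_⟩
    simp [Fintype.card_eq_zero, Real.zero_rpow (by norm_num : (1:ℝ)/4 ≠ 0)]
  -- the maximum size of a clique-or-stable set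
  set S : Finset (Finset V) :=
    Finset.univ.filter (fun t => G.IsClique ↑t ∨ Gᶜ.IsClique ↑t) with hS
  have hSne : (S.image Finset.card).Nonempty := by
    refine ⟨0, Finset.mem_image.mpr ⟨∅, ?_, by simp⟩⟩
    simp [hS]
  set m : ℕ := (S.image Finset.card).max' hSne with hm
  have hle : ∀ t : Finset V, (G.IsClique ↑t ∨ Gᶜ.IsClique ↑t) → t.card ≤ m := by
    intro t ht
    exact Finset.le_max' _ _ (Finset.mem_image.mpr ⟨t, by simpa [hS] using ht, rfl⟩)
  have hm1 : 1 ≤ m := by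
    obtain ⟨v⟩ := hV
    have := hle {v} (Or.inl (by simp))
    simpa using this
  have hmpos : (0:ℝ) < (m:ℝ) := by exact_mod_cast hm1
  -- f ≡ 1/m² is good
  have hgood : Good G (fun _ => 1 / (m:ℝ)^2) := by
    constructor
    · intro v
      constructor
      · positivity
      · rw [div_le_one (by positivity)]
        have : (1:ℝ) ≤ (m:ℝ) := by exact_mod_cast hm1
        nlinarith
    · intro s hp
      rcases s.eq_empty_or_nonempty with rfl | hsne
      · simp
      obtain ⟨c, st, hc, hst, hcard⟩ := perfect_card_le G s hsne hp
      have h1 : (s.card : ℝ) ≤ (m:ℝ)^2 := by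
        have hc' := hle c (Or.inl hc)
        have hst' := hle st (Or.inr hst)
        have : s.card ≤ m * m := hcard.trans (Nat.mul_le_mul hc' hst')
        calc (s.card : ℝ) ≤ (m*m : ℕ) := by exact_mod_cast this
          _ = (m:ℝ)^2 := by push_cast; ring
      rw [Finset.sum_const, nsmul_eq_mul]
      rw [mul_one_div, div_le_one (by positivity)]
      exact h1
  -- apply narrowness
  have hnar := hnarrow _ hgood
  have hpow : ∀ v : V, ((1:ℝ) / (m:ℝ)^2) ^ (2:ℝ) = 1 / (m:ℝ)^4 := by
    intro v
    rw [show (2:ℝ) = ((2:ℕ):ℝ) by norm_num, Real.rpow_natCast]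
    rw [div_pow, one_pow, ← pow_mul]
  simp only [hpow (Classical.arbitrary V)] at hnar
  rw [Finset.sum_const, nsmul_eq_mul, Finset.card_univ, mul_one_div,
    div_le_one (by positivity)] at hnar
  -- extract witness
  have hmem : m ∈ S.image Finset.card := (S.image Finset.card).max'_mem hSne
  obtain ⟨t, htS, htcard⟩ := Finset.mem_image.mp hmem
  have htprop : G.IsClique ↑t ∨ Gᶜ.IsClique ↑t := by
    simpa [hS] using htS
  refine ⟨t, htprop, ?_⟩
  rw [htcard]
  have h4 : ((Fintype.card V : ℝ)) ^ ((1:ℝ)/4) ≤ ((m:ℝ)^4) ^ ((1:ℝ)/4) :=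
    Real.rpow_le_rpow (by positivity) hnar (by norm_num)
  refine h4.trans_eq ?_
  rw [show ((m:ℝ)^4) = (m:ℝ) ^ ((4:ℕ):ℝ) by rw [Real.rpow_natCast],
    ← Real.rpow_mul (le_of_lt hmpos)]
  norm_num
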